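/- Let Z = (Z_1,…,Z_n) be an exchangeable tuple of random variables, let π_1,…,π_K be i.i.d. uniformly random permutations of [n] independent of Z, let Y_k = (Z_{π_k(1)},…,Z_{π_k(n)}) for k ∈ [K], and let Y_0 = (Z_1,…,Z_n). Then the tuple (Y_0, Y_1,…,Y_K) is exchangeable. -/

import Mathlib

open MeasureTheory ProbabilityTheory

/-- Discrete σ-algebra on the (finite) group of permutations. -/
instance permMeasurableSpace {α : Type*} : MeasurableSpace (Equiv.Perm α) := ⊤

/-- The uniform probability measure on the permutations of a finite type. -/
noncomputable def uniformPermMeasure (α : Type*) [Fintype α] [DecidableEq α] :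
    Measure (Equiv.Perm α) :=
  haveI : Nonempty (Equiv.Perm α) := ⟨1⟩
  (PMF.uniformOfFintype (Equiv.Perm α)).toMeasure

instance permDiscrete {α : Type*} : DiscreteMeasurableSpace (Equiv.Perm α) :=
  ⟨fun _ => MeasurableSpace.measurableSet_top⟩

instance uniformPermMeasure_prob (α : Type*) [Fintype α] [DecidableEq α] :
    IsProbabilityMeasure (uniformPermMeasure α) := by
  haveI : Nonempty (Equiv.Perm α) := ⟨1⟩
  unfold uniformPermMeasure
  infer_instance

lemma uniformPermMeasure_singleton {α : Type*} [Fintype α] [DecidableEq α] (σ : Equiv.Perm α) :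
    uniformPermMeasure α {σ} = (Fintype.card (Equiv.Perm α) : ENNReal)⁻¹ := by
  haveI : Nonempty (Equiv.Perm α) := ⟨1⟩
  rw [uniformPermMeasure, PMF.toMeasure_apply_singleton _ _ (measurableSet_singleton _),
    PMF.uniformOfFintype_apply]

lemma pi_uniform_singleton {α : Type*} [Fintype α] [DecidableEq α] (m : ℕ)
    (q : Fin m → Equiv.Perm α) :
    Measure.pi (fun _ : Fin m => uniformPermMeasure α) {q}
      = ((Fintype.card (Equiv.Perm α) : ENNReal))⁻¹ ^ m := by
  rw [← Set.univ_pi_singleton, Measure.pi_pi]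
  simp [uniformPermMeasure_singleton, Finset.prod_const]

/-- Fubini congruence lemma. -/
lemma map_prod_congr_right {X Y T : Type*} [MeasurableSpace X] [MeasurableSpace Y]
    [MeasurableSpace T] (μ : Measure X) (ν : Measure Y) [SFinite ν] {f g : X × Y → T}
    (hf : Measurable f) (hg : Measurable g)
    (h : ∀ x, Measure.map (fun y => f (x, y)) ν = Measure.map (fun y => g (x, y)) ν) :
    Measure.map f (μ.prod ν) = Measure.map g (μ.prod ν) := by
  ext s hs
  rw [Measure.map_apply hf hs, Measure.map_apply hg hs,
    Measure.prod_apply (hf hs), Measure.prod_apply (hg hs)]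
  refine lintegral_congr fun x => ?_
  have h1 : Prod.mk x ⁻¹' (f ⁻¹' s) = (fun y => f (x, y)) ⁻¹' s := rfl
  have h2 : Prod.mk x ⁻¹' (g ⁻¹' s) = (fun y => g (x, y)) ⁻¹' s := rfl
  rw [h1, h2,
    ← Measure.map_apply (f := fun y => f (x, y)) (hf.comp measurable_prodMk_left) hs,
    ← Measure.map_apply (f := fun y => g (x, y)) (hg.comp measurable_prodMk_left) hs, h x]

section Aux

variable {n K : ℕ}

/-- `j0` prepends the identity permutation. -/
def permJ0 (n K : ℕ) : (Fin K → Equiv.Perm (Fin n)) → (Fin (K + 1) → Equiv.Perm (Fin n)) :=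
  fun p => Fin.cases 1 p

/-- `H (q, z) k = z ∘ q k`. -/
def permApH (n K : ℕ) :
    (Fin (K + 1) → Equiv.Perm (Fin n)) × (Fin n → ℝ) → (Fin (K + 1) → Fin n → ℝ) :=
  fun x k => x.2 ∘ x.1 k

lemma permApH_measurable : Measurable (permApH n K) := by
  apply measurable_pi_lambda
  intro k
  apply measurable_pi_lambda
  intro i
  have : (fun x : (Fin (K + 1) → Equiv.Perm (Fin n)) × (Fin n → ℝ) => permApH n K x k i)
      = (fun y : (Fin n → ℝ) × Fin n => y.1 y.2) ∘ (fun x => (x.2, x.1 k i)) := rfl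
  rw [this]
  exact (measurable_from_prod_countable_left fun j => measurable_pi_apply j).comp
    (measurable_snd.prodMk ((Measurable.of_discrete (f := fun q : Fin (K + 1) → Equiv.Perm (Fin n) => q k i)).comp measurable_fst))

/-- mixing map `e' (σ, p) k = σ * permJ0 p k`. -/
def permMix (n K : ℕ) :
    Equiv.Perm (Fin n) × (Fin K → Equiv.Perm (Fin n)) → (Fin (K + 1) → Equiv.Perm (Fin n)) :=
  fun x k => x.1 * permJ0 n K x.2 k

lemma permMix_preimage_singleton (q : Fin (K + 1) → Equiv.Perm (Fin n)) :
    permMix n K ⁻¹' {q} = {(q 0, fun j => (q 0)⁻¹ * q j.succ)} := by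
  ext ⟨σ, p⟩
  simp only [Set.mem_preimage, Set.mem_singleton_iff, Prod.mk.injEq]
  constructor
  · intro h
    have h0 : σ = q 0 := by
      have := congrFun h 0
      simpa [permMix, permJ0] using this
    constructor
    · exact h0
    · funext j
      have := congrFun h j.succ
      simp only [permMix, permJ0, Fin.cases_succ] at this
      rw [← this, ← h0, inv_mul_cancel_left]
  · rintro ⟨h1, h2⟩
    funext k
    refine Fin.cases ?_ (fun j => ?_) k
    · simp [permMix, permJ0, h1]
    · simp only [permMix, permJ0, Fin.cases_succ]
      rw [congrFun h2 j, h1, mul_inv_cancel_left]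

/-- reindexing map on permutation tuples -/
lemma permReindex_preimage_singleton (τ : Equiv.Perm (Fin (K + 1)))
    (q : Fin (K + 1) → Equiv.Perm (Fin n)) :
    (fun (x : Fin (K + 1) → Equiv.Perm (Fin n)) (k : Fin (K + 1)) => x (τ k)) ⁻¹' {q}
      = {fun k => q (τ.symm k)} := by
  ext x
  simp only [Set.mem_preimage, Set.mem_singleton_iff]
  constructor
  · intro h
    funext k
    have := congrFun h (τ.symm k)
    simpa using this
  · intro h
    funext k
    rw [congrFun h (τ k)]
    simp

end Aux

section Aux2

variable {n K : ℕ}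

lemma permMix_map :
    Measure.map (permMix n K)
      ((uniformPermMeasure (Fin n)).prod (Measure.pi fun _ : Fin K => uniformPermMeasure (Fin n)))
      = Measure.pi (fun _ : Fin (K + 1) => uniformPermMeasure (Fin n)) := by
  refine Measure.ext_of_singleton fun q => ?_
  rw [Measure.map_apply Measurable.of_discrete (measurableSet_singleton q),
    permMix_preimage_singleton, ← Set.singleton_prod_singleton, Measure.prod_prod,
    uniformPermMeasure_singleton, pi_uniform_singleton, pi_uniform_singleton, pow_succ']

lemma permReindex_map (τ : Equiv.Perm (Fin (K + 1))) :
    Measure.map (fun (x : Fin (K + 1) → Equiv.Perm (Fin n)) (k : Fin (K + 1)) => x (τ k))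
      (Measure.pi fun _ : Fin (K + 1) => uniformPermMeasure (Fin n))
      = Measure.pi fun _ : Fin (K + 1) => uniformPermMeasure (Fin n) := by
  refine Measure.ext_of_singleton fun q => ?_
  rw [Measure.map_apply Measurable.of_discrete (measurableSet_singleton q),
    permReindex_preimage_singleton, pi_uniform_singleton, pi_uniform_singleton]

lemma lemmaB (ν : Measure (Fin n → ℝ)) [IsProbabilityMeasure ν] (τ : Equiv.Perm (Fin (K + 1))) :
    Measure.map (fun x : (Fin (K + 1) → Equiv.Perm (Fin n)) × (Fin n → ℝ) =>
        permApH n K (fun k => x.1 (τ k), x.2))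
      ((Measure.pi fun _ : Fin (K + 1) => uniformPermMeasure (Fin n)).prod ν)
      = Measure.map (permApH n K)
        ((Measure.pi fun _ : Fin (K + 1) => uniformPermMeasure (Fin n)).prod ν) := by
  have hr : Measurable (fun (q : Fin (K + 1) → Equiv.Perm (Fin n)) (k : Fin (K + 1)) => q (τ k)) :=
    Measurable.of_discrete
  have hc : (fun x : (Fin (K + 1) → Equiv.Perm (Fin n)) × (Fin n → ℝ) =>
        permApH n K (fun k => x.1 (τ k), x.2))
      = permApH n K ∘ (Prod.map (fun (q : Fin (K + 1) → Equiv.Perm (Fin n)) k => q (τ k)) id) :=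
    rfl
  rw [hc, ← Measure.map_map permApH_measurable (hr.prodMap measurable_id),
    ← Measure.map_prod_map _ _ hr measurable_id, Measure.map_id, permReindex_map τ]

lemma lemmaA (ν : Measure (Fin n → ℝ)) [IsProbabilityMeasure ν]
    (hν : ∀ σ : Equiv.Perm (Fin n), Measure.map (fun z (i : Fin n) => z (σ i)) ν = ν) :
    Measure.map (permApH n K)
      ((Measure.map (permJ0 n K) (Measure.pi fun _ : Fin K => uniformPermMeasure (Fin n))).prod ν)
      = Measure.map (permApH n K)
        ((Measure.pi fun _ : Fin (K + 1) => uniformPermMeasure (Fin n)).prod ν) := by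
  set U := uniformPermMeasure (Fin n) with hU
  set UK := Measure.pi fun _ : Fin K => uniformPermMeasure (Fin n) with hUK
  have hj0 : Measurable (permJ0 n K) := Measurable.of_discrete
  have hmix : Measurable (permMix n K) := Measurable.of_discrete
  have hUKsnd : UK = Measure.map Prod.snd (U.prod UK) := by
    rw [Measure.map_snd_prod, measure_univ, one_smul]
  calc Measure.map (permApH n K) ((Measure.map (permJ0 n K) UK).prod ν)
      = Measure.map (permApH n K)
          ((Measure.map (permJ0 n K ∘ Prod.snd) (U.prod UK)).prod ν) := by
        rw [← Measure.map_map hj0 measurable_snd, ← hUKsnd]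
    _ = Measure.map (permApH n K)
          (Measure.map (Prod.map (permJ0 n K ∘ Prod.snd) id) ((U.prod UK).prod ν)) := by
        rw [← Measure.map_prod_map _ _ (hj0.comp measurable_snd) measurable_id, Measure.map_id]
    _ = Measure.map (permApH n K ∘ Prod.map (permJ0 n K ∘ Prod.snd) id) ((U.prod UK).prod ν) :=
        Measure.map_map permApH_measurable ((hj0.comp measurable_snd).prodMap measurable_id)
    _ = Measure.map (permApH n K ∘ Prod.map (permMix n K) id) ((U.prod UK).prod ν) := by
        refine map_prod_congr_right _ _
          (permApH_measurable.comp ((hj0.comp measurable_snd).prodMap measurable_id))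
          (permApH_measurable.comp (hmix.prodMap measurable_id)) ?_
        rintro ⟨σ, p⟩
        have hsec : Measurable (fun z : Fin n → ℝ => permApH n K (permJ0 n K p, z)) :=
          permApH_measurable.comp measurable_prodMk_left
        have hcompσ : Measurable (fun z : Fin n → ℝ => fun i : Fin n => z (σ i)) :=
          measurable_pi_lambda _ fun i => measurable_pi_apply _
        have key : (fun z : Fin n → ℝ =>
              (permApH n K ∘ Prod.map (permMix n K) id) ((σ, p), z))
            = (fun z : Fin n → ℝ => permApH n K (permJ0 n K p, z))
              ∘ (fun z (i : Fin n) => z (σ i)) := by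
          funext z
          funext k
          funext i
          simp [permApH, permMix, Function.comp, Equiv.Perm.mul_apply]
        rw [show (fun z : Fin n → ℝ =>
              (permApH n K ∘ Prod.map (permJ0 n K ∘ Prod.snd) id) ((σ, p), z))
            = (fun z : Fin n → ℝ => permApH n K (permJ0 n K p, z)) from rfl,
          key, ← Measure.map_map hsec hcompσ, hν σ]
    _ = Measure.map (permApH n K)
          (Measure.map (Prod.map (permMix n K) id) ((U.prod UK).prod ν)) :=
        (Measure.map_map permApH_measurable (hmix.prodMap measurable_id)).symm
    _ = Measure.map (permApH n K)
          ((Measure.pi fun _ : Fin (K + 1) => uniformPermMeasure (Fin n)).prod ν) := by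
        rw [← Measure.map_prod_map _ _ hmix measurable_id, Measure.map_id, permMix_map]

end Aux2

/-- If `Z = (Z 1, …, Z n)` is an exchangeable tuple of random variables,
`π 1, …, π K` are i.i.d. uniformly random permutations of `[n]` independent of `Z`,
`Y k = (Z ∘ π k)` for `k ∈ [K]` and `Y 0 = Z`, then `(Y 0, Y 1, …, Y K)` is exchangeable. -/
theorem randomly_permuted_exchangeable_tuple_is_exchangeable
    {Ω : Type*} [MeasurableSpace Ω] (μ : Measure Ω) [IsProbabilityMeasure μ]
    (n K : ℕ) (Z : Ω → Fin n → ℝ) (hZmeas : Measurable Z)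
    (hZexch : ∀ σ : Equiv.Perm (Fin n),
      Measure.map (fun ω => fun i => Z ω (σ i)) μ = Measure.map Z μ)
    (π : Fin K → Ω → Equiv.Perm (Fin n))
    (hπmeas : ∀ k, Measurable (π k))
    -- the permutations are i.i.d. uniform and (jointly) independent of `Z`:
    (hπ : Measure.map (fun ω => (fun k => π k ω, Z ω)) μ =
      (Measure.pi fun _ : Fin K => uniformPermMeasure (Fin n)).prod (Measure.map Z μ))
    (Y : Fin (K + 1) → Ω → Fin n → ℝ)
    (hY0 : Y 0 = Z)
    (hYk : ∀ k : Fin K, ∀ ω, Y k.succ ω = fun i => Z ω (π k ω i)) :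
    ∀ τ : Equiv.Perm (Fin (K + 1)),
      Measure.map (fun ω => fun k => Y (τ k) ω) μ = Measure.map (fun ω => fun k => Y k ω) μ := by
  intro τ
  haveI : IsProbabilityMeasure (Measure.map Z μ) :=
    Measure.isProbabilityMeasure_map hZmeas.aemeasurable
  have hν : ∀ σ : Equiv.Perm (Fin n),
      Measure.map (fun z (i : Fin n) => z (σ i)) (Measure.map Z μ) = Measure.map Z μ := by
    intro σ
    have hm : Measurable (fun z : Fin n → ℝ => fun i : Fin n => z (σ i)) :=
      measurable_pi_lambda _ fun i => measurable_pi_apply _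
    rw [Measure.map_map hm hZmeas]
    exact hZexch σ
  have hP0 : Measurable (fun ω => (fun k => π k ω, Z ω)) :=
    (measurable_pi_lambda _ fun k => hπmeas k).prodMk hZmeas
  have hj0 : Measurable (permJ0 n K) := Measurable.of_discrete
  have hident : (fun ω (k : Fin (K + 1)) => Y k ω)
      = (permApH n K ∘ Prod.map (permJ0 n K) id) ∘ (fun ω => (fun k => π k ω, Z ω)) := by
    funext ω
    funext k
    refine Fin.cases ?_ (fun j => ?_) k
    · simp [permApH, permJ0, hY0, Function.comp]
    · funext i
      simp [permApH, permJ0, hYk j ω]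
  have hlaw : Measure.map (fun ω (k : Fin (K + 1)) => Y k ω) μ
      = Measure.map (permApH n K)
          ((Measure.map (permJ0 n K)
            (Measure.pi fun _ : Fin K => uniformPermMeasure (Fin n))).prod (Measure.map Z μ)) := by
    rw [hident,
      ← Measure.map_map (permApH_measurable.comp (hj0.prodMap measurable_id)) hP0, hπ,
      ← Measure.map_map permApH_measurable (hj0.prodMap measurable_id),
      ← Measure.map_prod_map _ _ hj0 measurable_id, Measure.map_id]
  have hreT : Measurable (fun (y : Fin (K + 1) → Fin n → ℝ) (k : Fin (K + 1)) => y (τ k)) :=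
    measurable_pi_lambda _ fun k => measurable_pi_apply _
  have hYmeas : Measurable (fun ω (k : Fin (K + 1)) => Y k ω) := by
    rw [hident]
    exact (permApH_measurable.comp (hj0.prodMap measurable_id)).comp hP0
  have hsplit : (fun ω (k : Fin (K + 1)) => Y (τ k) ω)
      = (fun (y : Fin (K + 1) → Fin n → ℝ) (k : Fin (K + 1)) => y (τ k))
        ∘ (fun ω (k : Fin (K + 1)) => Y k ω) := rfl
  calc Measure.map (fun ω (k : Fin (K + 1)) => Y (τ k) ω) μ
      = Measure.map (fun (y : Fin (K + 1) → Fin n → ℝ) (k : Fin (K + 1)) => y (τ k))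
          (Measure.map (fun ω (k : Fin (K + 1)) => Y k ω) μ) := by
        rw [Measure.map_map hreT hYmeas, hsplit]
    _ = Measure.map (fun (y : Fin (K + 1) → Fin n → ℝ) (k : Fin (K + 1)) => y (τ k))
          (Measure.map (permApH n K)
            ((Measure.pi fun _ : Fin (K + 1) => uniformPermMeasure (Fin n)).prod
              (Measure.map Z μ))) := by
        rw [hlaw, lemmaA (Measure.map Z μ) hν]
    _ = Measure.map ((fun (y : Fin (K + 1) → Fin n → ℝ) (k : Fin (K + 1)) => y (τ k))
          ∘ permApH n K)
          ((Measure.pi fun _ : Fin (K + 1) => uniformPermMeasure (Fin n)).prod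
            (Measure.map Z μ)) :=
        Measure.map_map hreT permApH_measurable
    _ = Measure.map (fun x : (Fin (K + 1) → Equiv.Perm (Fin n)) × (Fin n → ℝ) =>
          permApH n K (fun k => x.1 (τ k), x.2))
          ((Measure.pi fun _ : Fin (K + 1) => uniformPermMeasure (Fin n)).prod
            (Measure.map Z μ)) := rfl
    _ = Measure.map (permApH n K)
          ((Measure.pi fun _ : Fin (K + 1) => uniformPermMeasure (Fin n)).prod
            (Measure.map Z μ)) := lemmaB (Measure.map Z μ) τ
    _ = Measure.map (fun ω (k : Fin (K + 1)) => Y k ω) μ := by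
        rw [hlaw, lemmaA (Measure.map Z μ) hν]
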